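/- arXiv:2301.01744 — 6 statements merged into one kernel-verified Lean document; each statement's English description precedes it below -/
import Mathlib

section
/- Let t > 0, W ≥ 1, δ > 0, and let g : [0,t] → W∞ be a monotone piecewise constant function, where W∞ := {0} ∪ [1,W] ∪ {+∞}. Then the rounded function ⌈g⌉_{1+δ} (defined pointwise) satisfies: (i) g(x) ≤ ⌈g⌉_{1+δ}(x) ≤ (1+δ)·g(x) for every x ∈ [0,t]; (ii) ⌈g⌉_{1+δ} is a monotone piecewise constant function with at most ⌈log_{1+δ}(W)⌉ + 3 pieces. -/
open scoped ENNReal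

/-- `f : [0,t] → [0,+∞]` is piecewise constant with `p` pieces. -/
def IsPiecewiseConstant (t : ℝ) (f : ℝ → ℝ≥0∞) (p : ℕ) : Prop :=
  0 < p ∧ ∃ (x : ℕ → ℝ) (y : ℕ → ℝ≥0∞),
    x 0 = 0 ∧ x p = t ∧ (∀ i, i < p → x i < x (i + 1)) ∧
    (∀ i, i < p → ∀ z ∈ Set.Ico (x i) (x (i + 1)), f z = y (i + 1)) ∧
    f t = y p

/-- Rounding up to the smallest power of `1+δ` that is at least `y`, with the
conventions `⌈0⌉ = 0` and `⌈∞⌉ = ∞`. -/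
noncomputable def roundUpPow (δ : ℝ) (y : ℝ≥0∞) : ℝ≥0∞ :=
  if y = 0 then 0
  else if y = ⊤ then ⊤
  else sInf {z : ℝ≥0∞ | ∃ i : ℕ, z = ENNReal.ofReal ((1 + δ) ^ i) ∧ y ≤ z}

lemma roundUpPow_mono (δ : ℝ) : Monotone (roundUpPow δ) := by
  intro a b hab
  unfold roundUpPow
  by_cases ha : a = 0
  · simp [ha]
  · have hb : b ≠ 0 := fun h => ha (le_antisymm (h ▸ hab) zero_le)
    rw [if_neg ha, if_neg hb]
    by_cases hbt : b = ⊤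
    · simp [hbt]
    · have hat : a ≠ ⊤ := fun h => hbt (top_le_iff.mp (h ▸ hab))
      rw [if_neg hat, if_neg hbt]
      apply sInf_le_sInf
      rintro z ⟨i, rfl, hz⟩
      exact ⟨i, rfl, hab.trans hz⟩

lemma roundUpPow_spec (W δ : ℝ) (hW : 1 ≤ W) (hδ : 0 < δ) (y : ℝ≥0∞)
    (h1 : 1 ≤ y) (h2 : y ≤ ENNReal.ofReal W) :
    ∃ i ≤ ⌈Real.logb (1 + δ) W⌉₊,
      roundUpPow δ y = ENNReal.ofReal ((1 + δ) ^ i) ∧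
      y ≤ roundUpPow δ y ∧ roundUpPow δ y ≤ ENNReal.ofReal (1 + δ) * y := by
  have hb1 : (1:ℝ) < 1 + δ := by linarith
  have hb0 : (0:ℝ) < 1 + δ := by linarith
  have hy0 : y ≠ 0 := fun h => by simp [h] at h1
  have hyt : y ≠ ⊤ := fun h => by
    rw [h, top_le_iff] at h2; exact ENNReal.ofReal_ne_top h2
  set N := ⌈Real.logb (1 + δ) W⌉₊ with hN
  have hWN : W ≤ (1 + δ) ^ N := by
    have hlog : Real.logb (1 + δ) W ≤ (N : ℝ) := Nat.le_ceil _
    calc W = (1 + δ) ^ (Real.logb (1 + δ) W) := (Real.rpow_logb hb0 (ne_of_gt hb1) (by linarith)).symm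
    _ ≤ (1 + δ) ^ (N : ℝ) := Real.rpow_le_rpow_of_exponent_le hb1.le hlog
    _ = (1 + δ) ^ N := Real.rpow_natCast _ _
  have hex : ∃ i : ℕ, y ≤ ENNReal.ofReal ((1 + δ) ^ i) :=
    ⟨N, h2.trans (ENNReal.ofReal_le_ofReal hWN)⟩
  classical
  set i₀ := Nat.find hex with hi₀
  have hspec : y ≤ ENNReal.ofReal ((1 + δ) ^ i₀) := Nat.find_spec hex
  have hi₀N : i₀ ≤ N := Nat.find_le (h2.trans (ENNReal.ofReal_le_ofReal hWN))
  have hval : roundUpPow δ y = ENNReal.ofReal ((1 + δ) ^ i₀) := by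
    rw [roundUpPow, if_neg hy0, if_neg hyt]
    apply le_antisymm
    · exact sInf_le ⟨i₀, rfl, hspec⟩
    · apply le_sInf
      rintro z ⟨i, rfl, hz⟩
      have : i₀ ≤ i := by
        by_contra hlt
        exact Nat.find_min hex (not_le.mp hlt) hz
      exact ENNReal.ofReal_le_ofReal (pow_le_pow_right₀ hb1.le this)
  refine ⟨i₀, hi₀N, hval, hval ▸ hspec, ?_⟩
  rw [hval]
  rcases Nat.eq_zero_or_pos i₀ with h0 | hpos
  · rw [h0]
    simp only [pow_zero, ENNReal.ofReal_one]
    calc (1:ℝ≥0∞) = 1 * 1 := (one_mul 1).symm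
    _ ≤ ENNReal.ofReal (1 + δ) * y := by
        apply mul_le_mul' _ h1
        rw [show (1:ℝ≥0∞) = ENNReal.ofReal 1 by simp]
        exact ENNReal.ofReal_le_ofReal (by linarith)
  · obtain ⟨k, hke⟩ : ∃ k, i₀ = k + 1 := ⟨i₀ - 1, (Nat.succ_pred_eq_of_pos hpos).symm⟩
    have hk : ¬ y ≤ ENNReal.ofReal ((1 + δ) ^ k) := by
      apply Nat.find_min hex
      rw [← hi₀, hke]; exact Nat.lt_succ_self k
    have hk' : ENNReal.ofReal ((1 + δ) ^ k) ≤ y := (not_le.mp hk).le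
    rw [hke]
    calc ENNReal.ofReal ((1 + δ) ^ (k + 1))
        = ENNReal.ofReal ((1 + δ) * (1 + δ) ^ k) := by ring_nf
      _ = ENNReal.ofReal (1 + δ) * ENNReal.ofReal ((1 + δ) ^ k) :=
          ENNReal.ofReal_mul hb0.le
      _ ≤ ENNReal.ofReal (1 + δ) * y := mul_le_mul_right hk' _

lemma exists_small_pieces (t : ℝ) (f : ℝ → ℝ≥0∞) (q : ℕ)
    (h : IsPiecewiseConstant t f q)
    (hmono : MonotoneOn f (Set.Icc 0 t) ∨ AntitoneOn f (Set.Icc 0 t))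
    (V : Finset ℝ≥0∞) (hV : ∀ x ∈ Set.Icc (0:ℝ) t, f x ∈ V) :
    ∃ p ≤ V.card, IsPiecewiseConstant t f p := by
  classical
  obtain ⟨hq, x, y, hx0, hxq, hxs, hcon, hft⟩ := h
  -- monotonicity of breakpoints
  have hxmono : ∀ i j, i ≤ j → j ≤ q → x i ≤ x j := by
    intro i j hij hjq
    induction j, hij using Nat.le_induction with
    | base => exact le_rfl
    | succ j hij ih => exact (ih (by omega)).trans (hxs j (by omega)).le
  have hxstrict : ∀ i j, i < j → j ≤ q → x i < x j := by
    intro i j hij hjq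
    exact lt_of_lt_of_le (hxs i (by omega)) (hxmono (i+1) j hij hjq)
  have hxmem : ∀ i, i ≤ q → x i ∈ Set.Icc (0:ℝ) t := fun i hi =>
    ⟨hx0 ▸ hxmono 0 i (Nat.zero_le _) hi, hxq ▸ hxmono i q hi le_rfl⟩
  set v : ℕ → ℝ≥0∞ := fun i => f (x i) with hvdef
  have hv : ∀ i, i < q → ∀ z ∈ Set.Ico (x i) (x (i+1)), f z = v i := by
    intro i hi z hz
    rw [hcon i hi z hz, hvdef]
    exact (hcon i hi (x i) ⟨le_rfl, hxs i hi⟩).symm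
  have hvlast : f t = v (q-1) := by
    have h1 : q - 1 < q := by omega
    have h2 : v (q-1) = y (q-1+1) := hcon _ h1 (x (q-1)) ⟨le_rfl, hxs _ h1⟩
    rw [hft, h2]
    congr 1
    omega
  have hvmono : (∀ i j, i ≤ j → j < q → v i ≤ v j) ∨
      (∀ i j, i ≤ j → j < q → v j ≤ v i) := by
    rcases hmono with hm | hm
    · exact Or.inl fun i j hij hjq =>
        hm (hxmem i (by omega)) (hxmem j hjq.le) (hxmono i j hij hjq.le)
    · exact Or.inr fun i j hij hjq =>
        hm (hxmem i (by omega)) (hxmem j hjq.le) (hxmono i j hij hjq.le)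
  -- change points
  set D : Finset ℕ := (Finset.range q).filter (fun i => i = 0 ∨ v i ≠ v (i-1)) with hD
  have h0D : (0:ℕ) ∈ D := Finset.mem_filter.mpr ⟨Finset.mem_range.mpr hq, Or.inl rfl⟩
  set p := D.card with hp
  have hppos : 0 < p := Finset.card_pos.mpr ⟨0, h0D⟩
  set e : Fin p ↪o ℕ := D.orderEmbOfFin hp.symm with he
  have e_mem : ∀ j, (e j : ℕ) ∈ D := fun j => D.orderEmbOfFin_mem hp.symm j
  have e_surj : ∀ k ∈ D, ∃ j, e j = k := by
    intro k hk
    have : k ∈ Set.range e := by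
      rw [Finset.range_orderEmbOfFin]
      exact_mod_cast hk
    exact this
  set E : ℕ → ℕ := fun j => if hj : j < p then e ⟨j, hj⟩ else q with hE
  have E_lt_q : ∀ j, j < p → E j < q := by
    intro j hj
    simp only [hE, dif_pos hj]
    have := e_mem ⟨j, hj⟩
    rw [hD] at this
    exact Finset.mem_range.mp (Finset.mem_filter.mp this).1
  have E_le_q : ∀ j, E j ≤ q := by
    intro j
    by_cases hj : j < p
    · exact (E_lt_q j hj).le
    · simp [hE, dif_neg hj]
  have Ep : E p = q := by simp [hE]
  have E0 : E 0 = 0 := by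
    obtain ⟨j0, hj0⟩ := e_surj 0 h0D
    simp only [hE, dif_pos hppos]
    have : e ⟨0, hppos⟩ ≤ e j0 := e.monotone (by exact Fin.mk_le_mk.mpr (Nat.zero_le _))
    omega
  have E_strict : ∀ j, j < p → E j < E (j+1) := by
    intro j hj
    by_cases hj1 : j + 1 < p
    · simp only [hE, dif_pos hj, dif_pos hj1]
      exact e.strictMono (by exact Fin.mk_lt_mk.mpr (Nat.lt_succ_self j))
    · have : E (j+1) = q := by simp [hE, dif_neg hj1]
      rw [this]
      exact E_lt_q j hj
  have E_mono : ∀ j, E j ≤ E (j+1) := by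
    intro j
    by_cases hj : j < p
    · exact (E_strict j hj).le
    · have h1 : E j = q := by simp [hE, dif_neg hj]
      have h2 : ¬ (j + 1 < p) := by omega
      simp [hE, dif_neg hj, dif_neg h2]
  have no_between : ∀ j, j < p → ∀ k ∈ D, E j < k → E (j+1) ≤ k := by
    intro j hj k hk h1
    obtain ⟨j', hj'⟩ := e_surj k hk
    have hjj' : (⟨j, hj⟩ : Fin p) < j' := by
      rw [← e.lt_iff_lt, hj']
      simpa [hE, dif_pos hj] using h1
    have hjj'' : j + 1 ≤ (j' : ℕ) := hjj'
    by_cases hj1 : j + 1 < p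
    · have : e ⟨j+1, hj1⟩ ≤ e j' := e.monotone (by exact Fin.mk_le_mk.mpr hjj'')
      simp only [hE, dif_pos hj1]
      omega
    · exact absurd (lt_of_le_of_lt hjj'' j'.isLt) (by omega)
  have const_prop : ∀ j, j < p → ∀ k, E j ≤ k → k < E (j+1) → v k = v (E j) := by
    intro j hj k hk1 hk2
    induction k, hk1 using Nat.le_induction with
    | base => rfl
    | succ k hk ih =>
      have hkD : k + 1 ∉ D := by
        intro hmem
        have := no_between j hj (k+1) hmem (by omega)
        omega
      have hkq : k + 1 < q := lt_of_lt_of_le hk2 (E_le_q (j+1))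
      have : v (k+1) = v k := by
        rw [hD] at hkD
        simp only [Finset.mem_filter, Finset.mem_range, not_and, not_or, not_not] at hkD
        have := hkD hkq
        simpa using this.2
      rw [this]
      exact ih (by omega)
  -- locating a piece
  have find_piece : ∀ a b z, a ≤ b → b ≤ q → x a ≤ z → z < x b →
      ∃ i, a ≤ i ∧ i < b ∧ x i ≤ z ∧ z < x (i+1) := by
    intro a b
    induction b with
    | zero =>
      intro z h1 h2 h3 h4
      have : a = 0 := by omega
      subst this
      linarith
    | succ b ih =>
      intro z h1 h2 h3 h4
      have hab : a ≤ b := by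
        by_contra hab
        have : a = b + 1 := by omega
        subst this
        linarith
      by_cases hc : x b ≤ z
      · exact ⟨b, hab, Nat.lt_succ_self b, hc, h4⟩
      · obtain ⟨i, hi1, hi2, hi3, hi4⟩ := ih z hab (by omega) h3 (not_le.mp hc)
        exact ⟨i, hi1, by omega, hi3, hi4⟩
  -- injectivity of v on D
  have v_ne : ∀ a b, a ∈ D → b ∈ D → a < b → v a ≠ v b := by
    intro a b ha hb hab
    have hbq : b < q := by
      rw [hD] at hb
      exact Finset.mem_range.mp (Finset.mem_filter.mp hb).1
    have hbne : v b ≠ v (b-1) := by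
      rw [hD] at hb
      rcases (Finset.mem_filter.mp hb).2 with h | h
      · omega
      · exact h
    rcases hvmono with hm | hm
    · have h1 : v a ≤ v (b-1) := hm a (b-1) (by omega) (by omega)
      have h2 : v (b-1) ≤ v b := hm (b-1) b (by omega) hbq
      intro hvv
      have h3 : v b ≤ v (b-1) := hvv ▸ h1
      exact hbne (le_antisymm h3 h2)
    · have h1 : v (b-1) ≤ v a := hm a (b-1) (by omega) (by omega)
      have h2 : v b ≤ v (b-1) := hm (b-1) b (by omega) hbq
      intro hvv
      have h3 : v (b-1) ≤ v b := hvv ▸ h1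
      exact hbne (le_antisymm h2 h3)
  -- cardinality bound
  have hcard : p ≤ V.card := by
    rw [hp]
    apply Finset.card_le_card_of_injOn v
    · intro i hi
      rw [hD] at hi
      have hiq : i < q := Finset.mem_range.mp (Finset.mem_filter.mp hi).1
      exact hV (x i) (hxmem i hiq.le)
    · intro a ha b hb hvv
      rcases lt_trichotomy a b with hlt | heq | hgt
      · exact absurd hvv (v_ne a b ha hb hlt)
      · exact heq
      · exact absurd hvv.symm (v_ne b a hb ha hgt)
  refine ⟨p, hcard, hppos, (fun j => x (E j)), (fun j => v (E (j-1))), ?_, ?_, ?_, ?_, ?_⟩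
  · show x (E 0) = 0
    rw [E0, hx0]
  · show x (E p) = t
    rw [Ep, hxq]
  · intro j hj
    exact hxstrict (E j) (E (j+1)) (E_strict j hj) (E_le_q (j+1))
  · intro j hj z hz
    show f z = v (E (j + 1 - 1))
    obtain ⟨i, hi1, hi2, hi3, hi4⟩ :=
      find_piece (E j) (E (j+1)) z (E_mono j) (E_le_q (j+1)) hz.1 hz.2
    have hiq : i < q := lt_of_lt_of_le hi2 (E_le_q (j+1))
    have h1 : f z = v i := hv i hiq z ⟨hi3, hi4⟩
    have h2 : v i = v (E j) := const_prop j hj i hi1 hi2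
    have h3 : j + 1 - 1 = j := by omega
    rw [h1, h2, h3]
  · show f t = v (E (p - 1))
    rw [hvlast]
    have h1 : E (p-1) ≤ q - 1 := by
      have := E_lt_q (p-1) (by omega)
      omega
    have h2 : q - 1 < E (p-1+1) := by
      have : p - 1 + 1 = p := by omega
      rw [this, Ep]
      omega
    exact const_prop (p-1) (by omega) (q-1) h1 h2

theorem roundUpPow_of_monotone_piecewiseConstant
    (t W δ : ℝ) (ht : 0 < t) (hW : 1 ≤ W) (hδ : 0 < δ)
    (g : ℝ → ℝ≥0∞) (pg : ℕ)
    (hg : IsPiecewiseConstant t g pg)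
    (hgmono : MonotoneOn g (Set.Icc 0 t) ∨ AntitoneOn g (Set.Icc 0 t))
    (hval : ∀ x ∈ Set.Icc (0 : ℝ) t,
      g x = 0 ∨ g x = ⊤ ∨ (1 ≤ g x ∧ g x ≤ ENNReal.ofReal W)) :
    (∀ x ∈ Set.Icc (0 : ℝ) t,
      g x ≤ roundUpPow δ (g x) ∧
      roundUpPow δ (g x) ≤ ENNReal.ofReal (1 + δ) * g x) ∧
    ((MonotoneOn (fun x => roundUpPow δ (g x)) (Set.Icc 0 t) ∨
      AntitoneOn (fun x => roundUpPow δ (g x)) (Set.Icc 0 t)) ∧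
     ∃ p ≤ ⌈Real.logb (1 + δ) W⌉₊ + 3,
       IsPiecewiseConstant t (fun x => roundUpPow δ (g x)) p) := by
  have hb0 : (0:ℝ) < 1 + δ := by linarith
  have hr0 : roundUpPow δ 0 = 0 := by simp [roundUpPow]
  have hrt : roundUpPow δ ⊤ = ⊤ := by simp [roundUpPow]
  set N := ⌈Real.logb (1 + δ) W⌉₊ with hN
  constructor
  · -- sandwich bounds
    intro x hx
    rcases hval x hx with h0 | htp | ⟨h1, h2⟩
    · rw [h0, hr0]
      simp
    · rw [htp, hrt]
      constructor
      · exact le_rfl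
      · rw [ENNReal.mul_top]
        simp [ENNReal.ofReal_eq_zero]
        linarith
    · obtain ⟨i, _, _, hle, hub⟩ := roundUpPow_spec W δ hW hδ (g x) h1 h2
      exact ⟨hle, hub⟩
  constructor
  · -- monotonicity
    rcases hgmono with hm | hm
    · exact Or.inl fun a ha b hb hab => roundUpPow_mono δ (hm ha hb hab)
    · exact Or.inr fun a ha b hb hab => roundUpPow_mono δ (hm ha hb hab)
  · -- few pieces
    set V : Finset ℝ≥0∞ :=
      insert 0 (insert ⊤ ((Finset.range (N+1)).image
        (fun i => ENNReal.ofReal ((1+δ)^i)))) with hV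
    have hVcard : V.card ≤ N + 3 := by
      calc V.card ≤ (insert ⊤ ((Finset.range (N+1)).image
              (fun i => ENNReal.ofReal ((1+δ)^i)))).card + 1 :=
            Finset.card_insert_le _ _
        _ ≤ ((Finset.range (N+1)).image
              (fun i => ENNReal.ofReal ((1+δ)^i))).card + 1 + 1 := by
            have := Finset.card_insert_le (⊤:ℝ≥0∞)
              ((Finset.range (N+1)).image (fun i => ENNReal.ofReal ((1+δ)^i)))
            omega
        _ ≤ (N + 1) + 1 + 1 := by
            have h1 := Finset.card_image_le (s := Finset.range (N+1))
              (f := fun i => ENNReal.ofReal ((1+δ)^i))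
            rw [Finset.card_range] at h1
            omega
        _ = N + 3 := by omega
    have hmem : ∀ x ∈ Set.Icc (0:ℝ) t, roundUpPow δ (g x) ∈ V := by
      intro x hx
      rcases hval x hx with h0 | htp | ⟨h1, h2⟩
      · rw [h0, hr0]
        exact Finset.mem_insert_self _ _
      · rw [htp, hrt]
        exact Finset.mem_insert_of_mem (Finset.mem_insert_self _ _)
      · obtain ⟨i, hiN, hveq, _, _⟩ := roundUpPow_spec W δ hW hδ (g x) h1 h2
        rw [hveq]
        apply Finset.mem_insert_of_mem
        apply Finset.mem_insert_of_mem
        exact Finset.mem_image.mpr ⟨i, Finset.mem_range.mpr (by omega), rfl⟩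
    have hpc : IsPiecewiseConstant t (fun x => roundUpPow δ (g x)) pg := by
      obtain ⟨hq, x, y, hx0, hxq, hxs, hcon, hft⟩ := hg
      exact ⟨hq, x, fun i => roundUpPow δ (y i), hx0, hxq, hxs,
        fun i hi z hz => by
          show roundUpPow δ (g z) = roundUpPow δ (y (i+1))
          rw [hcon i hi z hz],
        by show roundUpPow δ (g t) = roundUpPow δ (y pg); rw [hft]⟩
    have hmono' : MonotoneOn (fun x => roundUpPow δ (g x)) (Set.Icc 0 t) ∨
        AntitoneOn (fun x => roundUpPow δ (g x)) (Set.Icc 0 t) := by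
      rcases hgmono with hm | hm
      · exact Or.inl fun a ha b hb hab => roundUpPow_mono δ (hm ha hb hab)
      · exact Or.inr fun a ha b hb hab => roundUpPow_mono δ (hm ha hb hab)
    obtain ⟨p, hple, hppc⟩ :=
      exists_small_pieces t (fun x => roundUpPow δ (g x)) pg hpc hmono' V hmem
    exact ⟨p, hple.trans hVcard, hppc⟩
end

section
/- Let t > 0 and let f₁, f₂ : [0,t] → [0,+∞] be piecewise constant functions. Then for every x ∈ [0,t] the infimum defining the (min,+)-convolution is attained: there exists x̄* ∈ [0,x] such that (f₁ ⊕ f₂)(x) = f₁(x̄*) + f₂(x − x̄*). -/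
open scoped ENNReal

/-- The `(min,+)`-convolution `(f₁ ⊕ f₂)(x) = inf_{x̄ ∈ [0,x]} (f₁(x̄) + f₂(x - x̄))`. -/
noncomputable def minPlusConv (f₁ f₂ : ℝ → ℝ≥0∞) (x : ℝ) : ℝ≥0∞ :=
  ⨅ y ∈ Set.Icc (0 : ℝ) x, f₁ y + f₂ (x - y)

lemma exists_piece {p : ℕ} (hp : 0 < p) (x : ℕ → ℝ) (z : ℝ)
    (hz0 : x 0 ≤ z) (hzp : z < x p) :
    ∃ i < p, x i ≤ z ∧ z < x (i + 1) := by
  classical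
  set S := (Finset.range p).filter (fun j => x j ≤ z) with hS
  have h0 : 0 ∈ S := by simp [hS, hp, hz0]
  have hne : S.Nonempty := ⟨0, h0⟩
  set i := S.max' hne with hi
  have hiS : i ∈ S := S.max'_mem hne
  have hip : i < p := Finset.mem_range.mp (Finset.mem_filter.mp hiS).1
  have hxi : x i ≤ z := (Finset.mem_filter.mp hiS).2
  refine ⟨i, hip, hxi, ?_⟩
  by_contra h
  push_neg at h
  have hip1 : i + 1 < p := by
    rcases lt_or_eq_of_le (Nat.succ_le_of_lt hip) with h' | h'
    · exact h'
    · exact absurd (h' ▸ h) (not_le.mpr hzp)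
  have hmem : i + 1 ∈ S := by simp [hS, hip1, h]
  have := S.le_max' _ hmem
  omega

lemma image_finite {t : ℝ} {f : ℝ → ℝ≥0∞} {p : ℕ}
    (hf : IsPiecewiseConstant t f p) : (f '' Set.Icc 0 t).Finite := by
  obtain ⟨hp, x, y, hx0, hxp, hmono, hpiece, hft⟩ := hf
  apply Set.Finite.subset ((Set.finite_Iic p).image y)
  rintro _ ⟨z, hz, rfl⟩
  rcases eq_or_lt_of_le hz.2 with h | h
  · subst h; exact ⟨p, Set.mem_Iic.mpr le_rfl, hft.symm⟩
  · obtain ⟨i, hip, h1, h2⟩ := exists_piece hp x z (hx0 ▸ hz.1) (hxp ▸ h)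
    exact ⟨i + 1, hip, (hpiece i hip z ⟨h1, h2⟩).symm⟩

theorem minPlusConv_attained
    (t : ℝ) (ht : 0 < t) (f₁ f₂ : ℝ → ℝ≥0∞)
    (hf₁ : ∃ p₁ : ℕ, IsPiecewiseConstant t f₁ p₁)
    (hf₂ : ∃ p₂ : ℕ, IsPiecewiseConstant t f₂ p₂) :
    ∀ x ∈ Set.Icc (0 : ℝ) t, ∃ x' ∈ Set.Icc (0 : ℝ) x,
      minPlusConv f₁ f₂ x = f₁ x' + f₂ (x - x') := by
  intro x hx
  obtain ⟨p₁, hf1⟩ := hf₁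
  obtain ⟨p₂, hf2⟩ := hf₂
  set g : ℝ → ℝ≥0∞ := fun y => f₁ y + f₂ (x - y) with hg
  have hsub : g '' Set.Icc 0 x ⊆
      Set.image2 (· + ·) (f₁ '' Set.Icc 0 t) (f₂ '' Set.Icc 0 t) := by
    rintro _ ⟨z, hz, rfl⟩
    exact Set.mem_image2_of_mem ⟨z, ⟨hz.1, hz.2.trans hx.2⟩, rfl⟩
      ⟨x - z, ⟨by linarith [hz.2], by linarith [hz.1, hx.2]⟩, rfl⟩
  have hfin : (g '' Set.Icc 0 x).Finite :=
    Set.Finite.subset (Set.Finite.image2 _ (image_finite hf1) (image_finite hf2)) hsub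
  have hne : (g '' Set.Icc 0 x).Nonempty := ⟨g 0, 0, ⟨le_rfl, hx.1⟩, rfl⟩
  obtain ⟨x', hx', heq⟩ := hne.csInf_mem hfin
  refine ⟨x', hx', ?_⟩
  have h1 : minPlusConv f₁ f₂ x = sInf (g '' Set.Icc 0 x) := by
    rw [minPlusConv, sInf_image]
  rw [h1, ← heq]
end

section
/- Let I be a finite set and E ⊆ I × I a relation whose directed graph is acyclic. For i ∈ I let In(i) := {i' ∈ I : (i',i) ∈ E}, and let ℓ(i) denote the level of i, i.e., the maximal length (number of edges) of a directed E-path ending at i. Let J be a set, let α ≥ 1 be a real, and for each i ∈ I let P_i be a map taking families (F(i'))_{i' ∈ In(i)} of functions J → [0,+∞] to a function J → [0,+∞]. Suppose: (a) DP : I → (J → [0,+∞]) satisfies DP(i) = P_i((DP(i'))_{i' ∈ In(i)}) for all i ∈ I; (b) each P_i is sensitivity-preserving, meaning that for every real β ≥ 1 and every family F with DP(i') ≤ F(i') ≤ β·DP(i') pointwise for all i' ∈ In(i), one has DP(i) ≤ P_i(F) ≤ β·DP(i) pointwise; (c) ADP : I → (J → [0,+∞]) satisfies P_i((ADP(i'))_{i'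 ∈ In(i)}) ≤ ADP(i) ≤ α·P_i((ADP(i'))_{i' ∈ In(i)}) pointwise for all i ∈ I. Then for every i ∈ I of level ℓ(i), DP(i) ≤ ADP(i) ≤ α^{ℓ(i)+1}·DP(i) pointwise. -/
open scoped ENNReal

/-- There is a directed `E`-path with `n` edges ending at `i`. -/
def HasPathEnding {I : Type*} (E : I → I → Prop) (n : ℕ) (i : I) : Prop :=
  ∃ c : ℕ → I, c n = i ∧ ∀ m, m < n → E (c m) (c (m + 1))

/-- The level of `i`: the maximal number of edges on a directed `E`-path ending at `i`. -/
noncomputable def level {I : Type*} (E : I → I → Prop) (i : I) : ℕ :=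
  sSup {n | HasPathEnding E n i}

theorem dp_sensitivity_approx
    {I : Type*} [Fintype I] {J : Type*}
    (E : I → I → Prop)
    (hacyclic : ∀ i, ¬ Relation.TransGen E i i)
    (α : ℝ) (hα : 1 ≤ α)
    (P : (i : I) → (({j // E j i} → J → ℝ≥0∞) → J → ℝ≥0∞))
    (DP ADP : I → J → ℝ≥0∞)
    -- (a) `DP` is computed by the procedures `P i` from the rows it depends on
    (hDP : ∀ i, DP i = P i (fun i' => DP i'.1))
    -- (b) each `P i` is sensitivity-preserving
    (hsens : ∀ i, ∀ β : ℝ, 1 ≤ β →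
      ∀ F : {j // E j i} → J → ℝ≥0∞,
        (∀ i' (x : J), DP i'.1 x ≤ F i' x ∧ F i' x ≤ ENNReal.ofReal β * DP i'.1 x) →
        ∀ x : J, DP i x ≤ P i F x ∧ P i F x ≤ ENNReal.ofReal β * DP i x)
    -- (c) `ADP` is an `α`-approximate evaluation of the procedures
    (hADP : ∀ i (x : J),
      P i (fun i' => ADP i'.1) x ≤ ADP i x ∧
      ADP i x ≤ ENNReal.ofReal α * P i (fun i' => ADP i'.1) x) :
    ∀ i (x : J),
      DP i x ≤ ADP i x ∧
      ADP i x ≤ ENNReal.ofReal α ^ (level E i + 1) * DP i x := by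
  -- boundedness of path lengths
  have hbdd : ∀ i : I, BddAbove {n | HasPathEnding E n i} := by
    intro i
    refine ⟨Fintype.card I, ?_⟩
    rintro n ⟨c, hc, hstep⟩
    have htrans : ∀ b a, a < b → b ≤ n → Relation.TransGen E (c a) (c b) := by
      intro b
      induction b with
      | zero => intro a ha; omega
      | succ b ih =>
        intro a hab hbn
        rcases Nat.lt_succ_iff_lt_or_eq.mp hab with h | h
        · exact (ih a h (by omega)).tail (hstep b (by omega))
        · subst h; exact Relation.TransGen.single (hstep a (by omega))
    have hinj : Function.Injective (fun m : Fin (n + 1) => c m) := by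
      intro a b hab
      by_contra hne
      have hne' : (a : ℕ) ≠ (b : ℕ) := fun h => hne (Fin.ext h)
      simp only at hab
      rcases hne'.lt_or_gt with h | h
      · have h' := htrans b a h (by omega)
        rw [← hab] at h'
        exact hacyclic _ h'
      · have h' := htrans a b h (by omega)
        rw [hab] at h'
        exact hacyclic _ h'
    have h2 : n + 1 ≤ Fintype.card I := by
      simpa using Fintype.card_le_of_injective _ hinj
    omega
  have hlev : ∀ i j, E j i → level E j < level E i := by
    intro i j hji
    have hne : {n | HasPathEnding E n j}.Nonempty :=
      ⟨0, fun _ => j, rfl, by omega⟩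
    obtain ⟨c, hc, hstep⟩ : HasPathEnding E (level E j) j :=
      Nat.sSup_mem hne (hbdd j)
    set L := level E j with hL
    have hpath : HasPathEnding E (L + 1) i := by
      refine ⟨fun m => if m ≤ L then c m else i, by simp, ?_⟩
      intro m hm
      by_cases h : m + 1 ≤ L
      · simp only [h, Nat.le_of_succ_le h, if_true]
        exact hstep m (by omega)
      · have hmL : m = L := by omega
        subst hmL
        simp only [le_refl, if_true, h, if_false, hc]
        exact hji
    have : L + 1 ≤ level E i := le_csSup (hbdd i) hpath
    omega
  -- the ENNReal scale factor
  have hα0 : (0:ℝ) ≤ α := by linarith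
  have hα1 : (1:ℝ≥0∞) ≤ ENNReal.ofReal α := by
    rw [← ENNReal.ofReal_one]
    exact ENNReal.ofReal_le_ofReal hα
  -- main strong induction on level
  have main : ∀ n : ℕ, ∀ i : I, level E i = n → ∀ x : J,
      DP i x ≤ ADP i x ∧ ADP i x ≤ ENNReal.ofReal α ^ (level E i + 1) * DP i x := by
    intro n
    induction n using Nat.strong_induction_on with
    | _ n ih =>
      intro i hn x
      have hF : ∀ (i' : {j // E j i}) (y : J),
          DP i'.1 y ≤ ADP i'.1 y ∧
          ADP i'.1 y ≤ ENNReal.ofReal (α ^ n) * DP i'.1 y := by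
        intro i' y
        have hlt : level E i'.1 < n := hn ▸ hlev i i'.1 i'.2
        obtain ⟨h1, h2⟩ := ih (level E i'.1) hlt i'.1 rfl y
        refine ⟨h1, h2.trans ?_⟩
        rw [ENNReal.ofReal_pow hα0]
        exact mul_le_mul_left (pow_le_pow_right' hα1 (by omega)) _
      have hsi := hsens i (α ^ n) (one_le_pow₀ hα) (fun i' => ADP i'.1) hF x
      obtain ⟨hP1, hP2⟩ := hsi
      obtain ⟨hA1, hA2⟩ := hADP i x
      constructor
      · exact hP1.trans hA1
      · calc ADP i x ≤ ENNReal.ofReal α * P i (fun i' => ADP i'.1) x := hA2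
          _ ≤ ENNReal.ofReal α * (ENNReal.ofReal (α ^ n) * DP i x) :=
              mul_le_mul_right hP2 _
          _ = ENNReal.ofReal α ^ (n + 1) * DP i x := by
              rw [ENNReal.ofReal_pow hα0, ← mul_assoc, pow_succ, mul_comm (ENNReal.ofReal α)]
          _ = ENNReal.ofReal α ^ (level E i + 1) * DP i x := by rw [hn]
  intro i x
  exact main (level E i) i rfl x
end

section
/- Let V_G be a finite set with a symmetric capacity function cap_G : V_G × V_G → [0,∞) satisfying cap_G(x,x) = 0 for all x. Let T be a finite rooted tree whose set of leaves is exactly V_G; for a vertex v of T let V_v ⊆ V_G denote the set of leaves in the subtree rooted at v, and for a tree edge e = {u,v} with v the child endpoint define cap_T(e) := Σ_{a ∈ V_v} Σ_{b ∈ V_G∖V_v} cap_G(a,b). Then for every subset S_T of the vertices of T, letting S := S_T ∩ V_G, the total capacity of tree edges cut by S_T is at least the capacity of the cut (S, V_G∖S) in G: Σ_{e = {u,v} edge of T with exactly one endpoint in S_T} cap_T(e) ≥ Σ_{a ∈ S} Σ_{b ∈ V_G∖S} cap_G(a,b). -/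
open scoped Classical

section Helpers
variable {V : Type*}
lemma racke_iterate_root (par : V → V) (r : V) (hroot : par r = r) :
    ∀ n, par^[n] r = r := by
  intro n; induction n with
  | zero => rfl
  | succ n ih => rw [Function.iterate_succ_apply', ih, hroot]

lemma racke_cycle_eq_root (par : V → V) (r : V) (hroot : par r = r)
    (w : V) (hw : ∃ N : ℕ, par^[N] w = r) (k : ℕ) (hk : 1 ≤ k)
    (hc : par^[k] w = w) : w = r := by
  obtain ⟨N, hN⟩ := hw
  have hcycle : ∀ t, par^[k * t] w = w := by
    intro t; induction t with
    | zero => rfl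
    | succ t ih =>
      rw [Nat.mul_succ, Function.iterate_add_apply, hc, ih]
  have hge : N ≤ k * N := Nat.le_mul_of_pos_left N hk
  have h1 : par^[k * N] w = w := hcycle N
  have h2 : par^[k * N] w = r := by
    have hsplit : k * N = (k * N - N) + N := by omega
    rw [hsplit, Function.iterate_add_apply, hN, racke_iterate_root par r hroot]
  rw [h2] at h1; exact h1.symm

lemma racke_flip (P : ℕ → Prop) (h0 : ¬ P 0) (m : ℕ) (hm : P m) :
    ∃ j < m, (∀ j' ≤ j, ¬ P j') ∧ P (j + 1) := by
  classical
  have hex : ∃ t, P (t + 1) := by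
    have hm0 : m ≠ 0 := by rintro rfl; exact h0 hm
    refine ⟨m - 1, ?_⟩
    have h : m - 1 + 1 = m := by omega
    rw [h]; exact hm
  refine ⟨Nat.find hex, ?_, ?_, Nat.find_spec hex⟩
  · by_contra hle
    push_neg at hle
    have : ∀ j' ≤ Nat.find hex, ¬ P j' := by
      intro j' hj'
      match j', hj' with
      | 0, _ => exact h0
      | (t+1), h => exact Nat.find_min hex (by omega)
    exact this m hle hm
  · intro j' hj'
    match j', hj' with
    | 0, _ => exact h0
    | (t+1), h => exact Nat.find_min hex (by omega)

lemma racke_key (par : V → V) (r : V) (hroot : par r = r)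
    (hreach : ∀ v, ∃ m : ℕ, par^[m] v = r)
    (S : V → Prop) (a b : V) (ha : S a) (hb : ¬ S b) (hr : S r) :
    ∃ v, v ≠ r ∧ Xor' (S v) (S (par v)) ∧
      Xor' (∃ i : ℕ, par^[i] a = v) (∃ j : ℕ, par^[j] b = v) := by
  obtain ⟨m, hm⟩ := hreach b
  have hPm : S (par^[m] b) := by rw [hm]; exact hr
  obtain ⟨j, hjm, hjall, hj1⟩ := racke_flip (fun t => S (par^[t] b)) hb m hPm
  set v := par^[j] b with hv
  have hvS : ¬ S v := hjall j le_rfl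
  have hpvS : S (par v) := by
    rw [hv, ← Function.iterate_succ_apply' par j b]; exact hj1
  have hvne : v ≠ r := fun h => hvS (by rw [h]; exact hr)
  by_cases hav : ∃ i : ℕ, par^[i] a = v
  · obtain ⟨i, hi⟩ := hav
    have hPi : ¬ ¬ S (par^[0] a) := not_not_intro ha
    have hPi' : ¬ S (par^[i] a) := by rw [hi]; exact hvS
    obtain ⟨i', hii, hiall, hi1⟩ := racke_flip (fun t => ¬ S (par^[t] a)) hPi i hPi'
    set w := par^[i'] a with hw
    have hwS : S w := not_not.mp (hiall i' le_rfl)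
    have hpwS : ¬ S (par w) := by
      rw [hw, ← Function.iterate_succ_apply' par i' a]; exact hi1
    have hwne : w ≠ r := by
      rintro rfl; exact hpwS (by rw [hroot]; exact hwS)
    refine ⟨w, hwne, Or.inl ⟨hwS, hpwS⟩, Or.inl ⟨⟨i', rfl⟩, ?_⟩⟩
    rintro ⟨j'', hj''⟩
    have hj''gt : j < j'' := by
      by_contra hle
      exact (hjall j'' (le_of_not_gt hle)) (by rw [hj'']; exact hwS)
    have hvw : par^[i - i'] w = v := by
      rw [hw, ← Function.iterate_add_apply, Nat.sub_add_cancel hii.le, hi]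
    have hwv : par^[j'' - j] v = w := by
      rw [hv, ← Function.iterate_add_apply, Nat.sub_add_cancel hj''gt.le, hj'']
    have hcyc : par^[(j'' - j) + (i - i')] w = w := by
      rw [Function.iterate_add_apply, hvw, hwv]
    have hk : 1 ≤ (j'' - j) + (i - i') := by omega
    exact hwne (racke_cycle_eq_root par r hroot w (hreach w) _ hk hcyc)
  · exact ⟨v, hvne, Or.inr ⟨hpvS, hvS⟩, Or.inr ⟨⟨j, rfl⟩, hav⟩⟩

end Helpers

theorem racke_tree_cut_lower_bound
    (V : Type*) [Fintype V] [DecidableEq V]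
    (capG : V → V → ℝ)
    (hsym : ∀ a b, capG a b = capG b a)
    (hnonneg : ∀ a b, 0 ≤ capG a b)
    (hdiag : ∀ a, capG a a = 0)
    -- the tree `T`: root `r` and parent map `par`, every vertex reaches the root
    (r : V) (par : V → V)
    (hroot : par r = r)
    (hreach : ∀ v, ∃ m : ℕ, par^[m] v = r)
    -- the set of leaves of `T` is exactly `V_G`
    (VG : Finset V)
    (hleaf : ∀ v, v ∈ VG ↔ ∀ u, par u = v → u = v)
    (ST : Finset V) :
    -- the capacity of the cut `(S, V_G \ S)` in `G`, where `S = S_T ∩ V_G`, is at most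
    -- the total capacity of the tree edges cut by `S_T`
    ∑ a ∈ ST ∩ VG, ∑ b ∈ VG \ (ST ∩ VG), capG a b ≤
      ∑ v ∈ Finset.univ.filter (fun v => v ≠ r ∧ Xor' (v ∈ ST) (par v ∈ ST)),
        ∑ a ∈ VG.filter (fun a => ∃ m : ℕ, par^[m] a = v),
          ∑ b ∈ VG \ VG.filter (fun a => ∃ m : ℕ, par^[m] a = v), capG a b := by
  classical
  set S : Finset V := ST ∩ VG with hSdef
  set A : V → Finset V := fun v => VG.filter (fun a => ∃ m : ℕ, par^[m] a = v) with hAdef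
  set C : Finset V := Finset.univ.filter (fun v => v ≠ r ∧ Xor' (v ∈ ST) (par v ∈ ST)) with hCdef
  set P : Finset (V × V) := S ×ˢ (VG \ S) with hPdef
  -- key existence for each pair
  have hkey : ∀ p ∈ P, ∃ v, v ∈ C ∧
      ((p.1 ∈ A v ∧ p.2 ∉ A v) ∨ (p.2 ∈ A v ∧ p.1 ∉ A v)) := by
    rintro ⟨a, b⟩ hp
    rw [hPdef, Finset.mem_product] at hp
    obtain ⟨haS, hbS⟩ := hp
    have haVG : a ∈ VG := (Finset.mem_inter.mp haS).2
    have haST : a ∈ ST := (Finset.mem_inter.mp haS).1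
    have hbVG : b ∈ VG := (Finset.mem_sdiff.mp hbS).1
    have hbST : b ∉ ST := fun h =>
      (Finset.mem_sdiff.mp hbS).2 (Finset.mem_inter.mpr ⟨h, hbVG⟩)
    have memA : ∀ x v, x ∈ VG → (∃ m : ℕ, par^[m] x = v) → x ∈ A v := by
      intro x v hx hex
      rw [hAdef]; exact Finset.mem_filter.mpr ⟨hx, hex⟩
    have nmemA : ∀ x v, ¬ (∃ m : ℕ, par^[m] x = v) → x ∉ A v := by
      intro x v hnex hx
      rw [hAdef] at hx; exact hnex (Finset.mem_filter.mp hx).2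
    by_cases hr : r ∈ ST
    · obtain ⟨v, hvr, hXor, hAnc⟩ :=
        racke_key par r hroot hreach (· ∈ ST) a b haST hbST hr
      refine ⟨v, Finset.mem_filter.mpr ⟨Finset.mem_univ v, hvr, hXor⟩, ?_⟩
      rcases hAnc with ⟨hea, hneb⟩ | ⟨heb, hnea⟩
      · exact Or.inl ⟨memA a v haVG hea, nmemA b v hneb⟩
      · exact Or.inr ⟨memA b v hbVG heb, nmemA a v hnea⟩
    · obtain ⟨v, hvr, hXor, hAnc⟩ :=
        racke_key par r hroot hreach (· ∉ ST) b a hbST (not_not_intro haST) hr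
      have hXor' : Xor' (v ∈ ST) (par v ∈ ST) := by
        rcases hXor with ⟨h1, h2⟩ | ⟨h1, h2⟩
        · exact Or.inr ⟨not_not.mp h2, h1⟩
        · exact Or.inl ⟨not_not.mp h2, h1⟩
      refine ⟨v, Finset.mem_filter.mpr ⟨Finset.mem_univ v, hvr, hXor'⟩, ?_⟩
      rcases hAnc with ⟨heb, hnea⟩ | ⟨hea, hneb⟩
      · exact Or.inr ⟨memA b v hbVG heb, nmemA a v hnea⟩
      · exact Or.inl ⟨memA a v haVG hea, nmemA b v hneb⟩
  -- the assignment map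
  set f : V × V → V := fun p => if h : p ∈ P then (hkey p h).choose else r with hfdef
  have hfC : ∀ p ∈ P, f p ∈ C := by
    intro p hp
    rw [hfdef]; simp only [dif_pos hp]
    exact (hkey p hp).choose_spec.1
  have hfspec : ∀ p ∈ P,
      (p.1 ∈ A (f p) ∧ p.2 ∉ A (f p)) ∨ (p.2 ∈ A (f p) ∧ p.1 ∉ A (f p)) := by
    intro p hp
    rw [hfdef]; simp only [dif_pos hp]
    exact (hkey p hp).choose_spec.2
  have hLHS : ∑ a ∈ S, ∑ b ∈ VG \ S, capG a b = ∑ p ∈ P, capG p.1 p.2 := by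
    rw [hPdef, Finset.sum_product]
  rw [hLHS, ← Finset.sum_fiberwise_of_maps_to hfC (fun p => capG p.1 p.2)]
  apply Finset.sum_le_sum
  intro v hv
  set Q : Finset (V × V) := P.filter (fun p => f p = v) with hQdef
  set g : V × V → V × V := fun p => if p.1 ∈ A v then p else p.swap with hgdef
  have hQspec : ∀ p ∈ Q, p ∈ P ∧
      ((p.1 ∈ A v ∧ p.2 ∉ A v) ∨ (p.2 ∈ A v ∧ p.1 ∉ A v)) := by
    intro p hp
    rw [hQdef, Finset.mem_filter] at hp
    refine ⟨hp.1, ?_⟩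
    have := hfspec p hp.1
    rwa [hp.2] at this
  have hgmem : ∀ p ∈ Q, g p ∈ (A v) ×ˢ (VG \ A v) := by
    intro p hp
    obtain ⟨hpP, hor⟩ := hQspec p hp
    rw [hPdef, Finset.mem_product] at hpP
    have h1VG : p.1 ∈ VG := (Finset.mem_inter.mp hpP.1).2
    have h2VG : p.2 ∈ VG := (Finset.mem_sdiff.mp hpP.2).1
    rw [hgdef, Finset.mem_product]
    rcases hor with ⟨h1, h2⟩ | ⟨h1, h2⟩
    · simp only [if_pos h1]
      exact ⟨h1, Finset.mem_sdiff.mpr ⟨h2VG, h2⟩⟩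
    · simp only [if_neg h2]
      exact ⟨h1, Finset.mem_sdiff.mpr ⟨h1VG, h2⟩⟩
  have hginj : ∀ p ∈ Q, ∀ q ∈ Q, g p = g q → p = q := by
    intro p hp q hq hgpq
    obtain ⟨hpP, hpor⟩ := hQspec p hp
    obtain ⟨hqP, hqor⟩ := hQspec q hq
    rw [hPdef, Finset.mem_product] at hpP hqP
    have hp1S : p.1 ∈ S := hpP.1
    have hp2S : p.2 ∉ S := (Finset.mem_sdiff.mp hpP.2).2
    have hq1S : q.1 ∈ S := hqP.1
    have hq2S : q.2 ∉ S := (Finset.mem_sdiff.mp hqP.2).2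
    rw [hgdef] at hgpq
    simp only at hgpq
    by_cases h1 : p.1 ∈ A v <;> by_cases h2 : q.1 ∈ A v
    · rwa [if_pos h1, if_pos h2] at hgpq
    · rw [if_pos h1, if_neg h2] at hgpq
      have : p.1 = q.2 := by rw [hgpq]; rfl
      exact absurd (this ▸ hp1S) hq2S
    · rw [if_neg h1, if_pos h2] at hgpq
      have : p.2 = q.1 := by rw [← hgpq]; rfl
      exact absurd (this ▸ hq1S) hp2S
    · rw [if_neg h1, if_neg h2] at hgpq
      exact Prod.swap_injective hgpq
  have hcap : ∀ p ∈ Q, capG p.1 p.2 = capG (g p).1 (g p).2 := by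
    intro p hp
    by_cases h : p.1 ∈ A v
    · simp only [hgdef, if_pos h]
    · simp only [hgdef, if_neg h, Prod.fst_swap, Prod.snd_swap]
      exact hsym p.1 p.2
  calc ∑ p ∈ Q, capG p.1 p.2
      = ∑ p ∈ Q, capG (g p).1 (g p).2 := Finset.sum_congr rfl hcap
    _ = ∑ q ∈ Q.image g, capG q.1 q.2 := by rw [Finset.sum_image hginj]
    _ ≤ ∑ q ∈ (A v) ×ˢ (VG \ A v), capG q.1 q.2 := by
        apply Finset.sum_le_sum_of_subset_of_nonneg
        · intro q hq
          obtain ⟨p, hp, rfl⟩ := Finset.mem_image.mp hq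
          exact hgmem p hp
        · intro q _ _; exact hnonneg q.1 q.2
    _ = ∑ a ∈ A v, ∑ b ∈ VG \ A v, capG a b := by rw [Finset.sum_product]
end

section
/- Let ε ∈ (0, 1/2), let s ≥ 1 be an integer with s < 1/(8ε(1+2ε)), let n ≥ 1 be an integer, and let k be a real number with n/(4s) ≤ k ≤ n. Consider the knapsack instance with budget B = n consisting of n small items, each of weight 1 and price 1, and one heavy item of weight n − k and price n − k + 2εn. Suppose S is a feasible solution (a set of items of total weight at most n) whose total price is at least (1−ε)(1+2ε)n. Then S contains the heavy item and at least one small item. -/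
/-- Items: `some i` is the `i`-th small item (weight 1, price 1);
`none` is the heavy item (weight `n - k`, price `n - k + 2εn`). -/
theorem approx_knapsack_solution_contains_heavy_and_small
    (ε : ℝ) (hε0 : 0 < ε) (hε1 : ε < 1 / 2)
    (s : ℕ) (hs : 1 ≤ s) (hsε : (s : ℝ) < 1 / (8 * ε * (1 + 2 * ε)))
    (n : ℕ) (hn : 1 ≤ n)
    (k : ℝ) (hk1 : (n : ℝ) / (4 * s) ≤ k) (hk2 : k ≤ n)
    (S : Finset (Option (Fin n)))
    (hfeas : ∑ o ∈ S, (Option.elim o ((n : ℝ) - k) (fun _ => 1)) ≤ (n : ℝ))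
    (hval : (1 - ε) * (1 + 2 * ε) * (n : ℝ) ≤
      ∑ o ∈ S, (Option.elim o ((n : ℝ) - k + 2 * ε * n) (fun _ => 1))) :
    none ∈ S ∧ ∃ i : Fin n, some i ∈ S := by
  have hn' : (0 : ℝ) < n := by exact_mod_cast hn
  have hs' : (0 : ℝ) < s := by exact_mod_cast hs
  have h8 : (0 : ℝ) < 8 * ε * (1 + 2 * ε) := by positivity
  have hs8 : (s : ℝ) * (8 * ε * (1 + 2 * ε)) < 1 := (lt_div_iff₀ h8).mp hsε
  have h4s : (0 : ℝ) < 4 * s := by positivity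
  have hk1' : (n : ℝ) ≤ k * (4 * s) := (div_le_iff₀ h4s).mp hk1
  have hk0 : 0 < k := by nlinarith
  -- heavy item is in S
  have hnone : none ∈ S := by
    by_contra h
    have hsum : ∑ o ∈ S, (Option.elim o ((n : ℝ) - k + 2 * ε * n) (fun _ => 1))
        = (S.card : ℝ) := by
      rw [Finset.card_eq_sum_ones, Nat.cast_sum]
      refine Finset.sum_congr rfl fun o ho => ?_
      match o with
      | none => exact absurd ho h
      | some i => simp
    have hsum2 : ∑ o ∈ S, (Option.elim o ((n : ℝ) - k) (fun _ => 1))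
        = (S.card : ℝ) := by
      rw [Finset.card_eq_sum_ones, Nat.cast_sum]
      refine Finset.sum_congr rfl fun o ho => ?_
      match o with
      | none => exact absurd ho h
      | some i => simp
    rw [hsum] at hval
    rw [hsum2] at hfeas
    nlinarith [mul_pos (mul_pos hε0 (by linarith : (0:ℝ) < 1 - 2 * ε)) hn']
  refine ⟨hnone, ?_⟩
  by_contra h
  push_neg at h
  have hSsub : S ⊆ {none} := by
    intro o ho
    match o with
    | none => simp
    | some i => exact absurd ho (h i)
  have hSeq : S = {none} := Finset.Subset.antisymm hSsub (Finset.singleton_subset_iff.mpr hnone)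
  rw [hSeq, Finset.sum_singleton] at hval
  simp only [Option.elim] at hval
  nlinarith
end

section
/- Let ε ∈ (0, 1/2), let s ≥ 1 be an integer with s < 1/(8ε(1+2ε)), let n ≥ 1 be an integer, and let k be a real number with n/(4s) ≤ k ≤ n. Consider the knapsack instance with budget B = n consisting of n small items, each of weight 1 and price 1, and one heavy item of weight n − k and price n − k + 2εn. Suppose S is a feasible solution (a set of items of total weight at most n) whose total price is at least (1−ε)(1+2ε)n, and let m denote the number of small items contained in S. Then k − n/(8s) ≤ m ≤ k. -/
/-- Items: `some i` is the `i`-th small item (weight 1, price 1);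
`none` is the heavy item (weight `n - k`, price `n - k + 2εn`). -/
theorem approx_knapsack_solution_small_count
    (ε : ℝ) (hε0 : 0 < ε) (hε1 : ε < 1 / 2)
    (s : ℕ) (hs : 1 ≤ s) (hsε : (s : ℝ) < 1 / (8 * ε * (1 + 2 * ε)))
    (n : ℕ) (hn : 1 ≤ n)
    (k : ℝ) (hk1 : (n : ℝ) / (4 * s) ≤ k) (hk2 : k ≤ n)
    (S : Finset (Option (Fin n)))
    (hfeas : ∑ o ∈ S, (Option.elim o ((n : ℝ) - k) (fun _ => 1)) ≤ (n : ℝ))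
    (hval : (1 - ε) * (1 + 2 * ε) * (n : ℝ) ≤
      ∑ o ∈ S, (Option.elim o ((n : ℝ) - k + 2 * ε * n) (fun _ => 1))) :
    k - (n : ℝ) / (8 * s) ≤ ((S.filter (fun o => o.isSome)).card : ℝ) ∧
    ((S.filter (fun o => o.isSome)).card : ℝ) ≤ k := by
  set T := S.filter (fun o => o.isSome) with hT
  set m : ℕ := T.card with hm
  have hs0 : (0:ℝ) < s := by exact_mod_cast hs
  have hn0 : (0:ℝ) < n := by exact_mod_cast hn
  -- sum over T of any such function is m
  have hsumT : ∀ c : ℝ, ∑ o ∈ T, (Option.elim o c (fun _ => 1)) = (m : ℝ) := by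
    intro c
    rw [Finset.sum_congr rfl (fun o ho => ?_), Finset.sum_const, nsmul_eq_mul, mul_one]
    have := (Finset.mem_filter.mp ho).2
    cases o with
    | none => simp at this
    | some i => rfl
  have hsplit : ∀ c : ℝ, ∑ o ∈ S, (Option.elim o c (fun _ => 1))
      = (if (none : Option (Fin n)) ∈ S then c else 0) + (m : ℝ) := by
    intro c
    have hfe : S.filter (fun o => ¬ (o.isSome = true))
        = if (none : Option (Fin n)) ∈ S then {none} else ∅ := by
      by_cases h : (none : Option (Fin n)) ∈ S
      · simp only [h, if_true]
        ext o
        cases o <;> simp [h]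
      · simp only [h, if_false]
        ext o
        cases o <;> simp [h]
    rw [← Finset.sum_filter_add_sum_filter_not S (fun o => o.isSome), hsumT c, hfe]
    by_cases h : (none : Option (Fin n)) ∈ S <;> simp [h] <;> ring
  -- m ≤ n
  have hmn : (m : ℝ) ≤ n := by
    have : m ≤ n := by
      have hh : T.card ≤ (Finset.univ : Finset (Fin n)).card := by
        apply Finset.card_le_card_of_injOn (fun o => o.getD ⟨0, hn⟩)
        · intro o _; exact Finset.mem_univ _
        · intro a ha b hb hab
          have ha' := (Finset.mem_filter.mp ha).2
          have hb' := (Finset.mem_filter.mp hb).2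
          cases a with
          | none => simp at ha'
          | some i => cases b with
            | none => simp at hb'
            | some j => simpa using hab
      simpa using hh
    exact_mod_cast this
  -- key arithmetic: ε(1+2ε)n ≤ n/(8s)
  have h8 : (8:ℝ) * ε * (1 + 2*ε) > 0 := by positivity
  have hkey : (s:ℝ) * (8 * ε * (1 + 2*ε)) < 1 := (lt_div_iff₀ h8).mp hsε
  have harith : ε * (1 + 2*ε) * n ≤ (n:ℝ) / (8 * s) := by
    rw [le_div_iff₀ (by positivity : (0:ℝ) < 8*s)]
    nlinarith [mul_le_mul_of_nonneg_left hkey.le hn0.le]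
  rw [hsplit] at hfeas hval
  by_cases h : (none : Option (Fin n)) ∈ S
  · simp only [h, if_true] at hfeas hval
    constructor
    · nlinarith
    · linarith
  · simp only [h, if_false] at hval
    exfalso
    nlinarith [mul_pos (mul_pos hε0 (by linarith : (0:ℝ) < 1 - 2*ε)) hn0]
end
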